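/- Let A be a Boolean algebra, κ an infinite index set, (V_n)_{n∈ω} a sequence of pairwise distinct ultrafilters on A, and (a_n)_{n∈ω} positive reals with Σ_n a_n = 1. Let φ : A → M_κ be a Boolean homomorphism whose induced measure is purely atomic with these data, i.e. λ_κ(φ(a)) = Σ_{n : a ∈ V_n} a_n for every a ∈ A. For each n let p_n = inf{φ(v) : v ∈ V_n}, the infimum taken in the complete Boolean algebra M_κ. Then the p_n are pairwise disjoint, λ_κ(p_n) ≥ a_n for every n, and sup_n p_n = ⊤ (so (p_n) is a maximal antichain in M_κ). -/

import Mathlib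

open MeasureTheory Set Filter Topology
open scoped symmDiff ENNReal

noncomputable section

universe u v

attribute [local instance] Classical.propDecidable

/-- The two-element set `{0,1}`, as an additive group (addition mod 2) with the
discrete topology. -/
inductive Two : Type
  | zero
  | one
  deriving DecidableEq

instance : Fintype Two := ⟨{Two.zero, Two.one}, fun x => by cases x <;> simp⟩

instance : Zero Two := ⟨Two.zero⟩
instance : One Two := ⟨Two.one⟩

/-- Addition modulo 2 on `{0,1}`. -/
def Two.add : Two → Two → Two
  | Two.zero, x => x
  | Two.one, Two.zero => Two.one
  | Two.one, Two.one => Two.zero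

instance : Add Two := ⟨Two.add⟩
instance : Neg Two := ⟨fun x => x⟩

instance : AddCommGroup Two where
  add := (· + ·)
  zero := Two.zero
  neg := (- ·)
  add_assoc := by decide
  zero_add := by decide
  add_zero := by decide
  neg_add_cancel := by decide
  add_comm := by decide
  nsmul := nsmulRec
  zsmul := zsmulRec

instance : TopologicalSpace Two := ⊥
instance : DiscreteTopology Two := ⟨rfl⟩

instance : IsTopologicalAddGroup Two where
  continuous_add := continuous_of_discreteTopology
  continuous_neg := continuous_of_discreteTopology

/-- The Cantor cube `{0,1}^κ`, with the product topology. -/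
abbrev Cube (κ : Type u) : Type u := κ → Two

instance (κ : Type u) : MeasurableSpace (Cube κ) := borel _

instance (κ : Type u) : BorelSpace (Cube κ) := ⟨rfl⟩

/-- The fair-coin product measure `λ_κ` on `{0,1}^κ`: the Haar measure of the compact
group `{0,1}^κ`, normalized so that the whole space has measure `1`. -/
def lam (κ : Type u) : Measure (Cube κ) :=
  Measure.addHaarMeasure ⟨⟨Set.univ, isCompact_univ⟩, by simpa using Set.univ_nonempty⟩

/-- The Boolean algebra of measurable subsets of `X`. -/
abbrev MSet (X : Type u) [MeasurableSpace X] : Type u := {s : Set X // MeasurableSet s}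

/-- The ideal of `μ`-null sets in the Boolean ring of measurable subsets of `X`. -/
def nullIdeal {X : Type u} [MeasurableSpace X] (μ : Measure X) :
    Ideal (AsBoolRing (MSet X)) where
  carrier := {s | μ (ofBoolRing s : MSet X).1 = 0}
  zero_mem' := by
    show μ (ofBoolRing (0 : AsBoolRing (MSet X)) : MSet X).1 = 0
    rw [ofBoolRing_zero]
    simpa using measure_empty (μ := μ)
  add_mem' := by
    intro a b ha hb
    show μ (ofBoolRing (a + b) : MSet X).1 = 0
    rw [ofBoolRing_add]
    refine le_antisymm ?_ (by simp)
    calc μ ((ofBoolRing a ∆ ofBoolRing b : MSet X) : Set X)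
        ≤ μ (((ofBoolRing a : MSet X) : Set X) ∪ ((ofBoolRing b : MSet X) : Set X)) := by
          refine measure_mono ?_
          simp only [symmDiff_def, MeasurableSet.sup_eq_union, MeasurableSet.coe_union,
            MeasurableSet.coe_sdiff]
          exact Set.union_subset_union Set.diff_subset Set.diff_subset
      _ ≤ μ ((ofBoolRing a : MSet X) : Set X) + μ ((ofBoolRing b : MSet X) : Set X) :=
          measure_union_le _ _
      _ = 0 := by rw [ha, hb, add_zero]
  smul_mem' := by
    intro c x hx
    show μ (ofBoolRing (c * x) : MSet X).1 = 0
    rw [ofBoolRing_mul]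
    refine le_antisymm ?_ (by simp)
    calc μ ((ofBoolRing c ⊓ ofBoolRing x : MSet X) : Set X)
        ≤ μ ((ofBoolRing x : MSet X) : Set X) := by
          refine measure_mono ?_
          simp only [MeasurableSet.inf_eq_inter, MeasurableSet.coe_inter]
          exact Set.inter_subset_right
      _ = 0 := hx

instance {X : Type u} [MeasurableSpace X] (μ : Measure X) :
    BooleanRing (AsBoolRing (MSet X) ⧸ nullIdeal μ) where
  isIdempotentElem a := by
    obtain ⟨x, rfl⟩ := Ideal.Quotient.mk_surjective a
    rw [IsIdempotentElem, ← map_mul]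
    exact congrArg _ (BooleanRing.mul_self x)

/-- The measure algebra of the measure `μ`: measurable sets modulo `μ`-null sets,
as a Boolean algebra.  For `μ = lam κ` this is the measure algebra `M_κ`. -/
abbrev MAlg (X : Type u) [MeasurableSpace X] (μ : Measure X) : Type u :=
  AsBoolAlg (AsBoolRing (MSet X) ⧸ nullIdeal μ)

/-- The class of a measurable set in the measure algebra. -/
def MAlg.mk {X : Type u} [MeasurableSpace X] (μ : Measure X) (s : MSet X) : MAlg X μ :=
  toBoolAlg (Ideal.Quotient.mk (nullIdeal μ) (toBoolRing s))

/-- The measure induced by `μ` on its measure algebra `MAlg X μ` (with real values). -/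
def mval {X : Type u} [MeasurableSpace X] (μ : Measure X) (a : MAlg X μ) : ℝ :=
  Quotient.liftOn' (ofBoolAlg a) (fun s => (μ (ofBoolRing s : MSet X).1).toReal)
    (by
      intro s t h
      have hst : s - t ∈ nullIdeal μ := by
        rwa [Submodule.quotientRel_def] at h
      have h0 : μ (((ofBoolRing s : MSet X) : Set X) ∆ ((ofBoolRing t : MSet X) : Set X)) = 0 := by
        have hn : μ ((ofBoolRing (s - t) : MSet X) : Set X) = 0 := hst
        rw [ofBoolRing_sub] at hn
        simpa only [symmDiff_def, MeasurableSet.sup_eq_union, MeasurableSet.coe_union,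
          MeasurableSet.coe_sdiff, Set.sup_eq_union] using hn
      have hc := measure_congr (μ := μ) (MeasureTheory.measure_symmDiff_eq_zero_iff.mp h0)
      simp only [hc])

/-- An ultrafilter on a Boolean algebra, as a set of elements: a maximal proper filter. -/
def IsUltrafilterOn {A : Type v} [BooleanAlgebra A] (U : Set A) : Prop :=
  ⊥ ∉ U ∧ (∀ a ∈ U, ∀ b ∈ U, a ⊓ b ∈ U) ∧ (∀ a ∈ U, ∀ b, a ≤ b → b ∈ U) ∧
    ∀ a, a ∈ U ∨ aᶜ ∈ U


section Infra

variable {X : Type u} [MeasurableSpace X] {μ : Measure X}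

theorem MAlg.mk_surjective (μ : Measure X) (x : MAlg X μ) : ∃ s : MSet X, MAlg.mk μ s = x := by
  obtain ⟨y, hy⟩ := Ideal.Quotient.mk_surjective (ofBoolAlg x)
  exact ⟨ofBoolRing y, by simp [MAlg.mk, toBoolRing_ofBoolRing, hy]⟩

theorem mval_mk (μ : Measure X) (s : MSet X) : mval μ (MAlg.mk μ s) = (μ s.1).toReal := rfl

theorem MAlg.mk_eq_mk {μ : Measure X} {s t : MSet X} :
    MAlg.mk μ s = MAlg.mk μ t ↔ μ (s.1 ∆ t.1) = 0 := by
  rw [MAlg.mk, MAlg.mk, toBoolAlg_inj, Ideal.Quotient.eq]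
  have : toBoolRing s - toBoolRing t ∈ nullIdeal μ ↔
      μ ((ofBoolRing (toBoolRing s - toBoolRing t) : MSet X) : Set X) = 0 := Iff.rfl
  rw [this, ofBoolRing_sub, ofBoolRing_toBoolRing, ofBoolRing_toBoolRing]
  simp only [symmDiff_def, MeasurableSet.sup_eq_union, MeasurableSet.coe_union,
    MeasurableSet.coe_sdiff, Set.sup_eq_union]

theorem MAlg.mk_inf (μ : Measure X) (s t : MSet X) :
    MAlg.mk μ (s ⊓ t) = MAlg.mk μ s ⊓ MAlg.mk μ t := by
  rw [MAlg.mk, MAlg.mk, MAlg.mk, ← toBoolAlg_mul, ← map_mul, toBoolRing_inf]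

theorem MAlg.mk_sup (μ : Measure X) (s t : MSet X) :
    MAlg.mk μ (s ⊔ t) = MAlg.mk μ s ⊔ MAlg.mk μ t := by
  have h : toBoolRing (s ⊔ t) =
      toBoolRing s + toBoolRing t + toBoolRing s * toBoolRing t := by
    rw [← ofBoolRing_inj, ofBoolRing_add, ofBoolRing_mul, ofBoolRing_toBoolRing,
      ofBoolRing_toBoolRing, ofBoolRing_toBoolRing]
    rw [ofBoolRing_add, ofBoolRing_toBoolRing, ofBoolRing_toBoolRing, symmDiff_symmDiff_inf]
  rw [MAlg.mk, MAlg.mk, MAlg.mk, ← toBoolAlg_add_add_mul, ← map_mul, ← map_add, ← map_add, h]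

theorem MAlg.mk_bot (μ : Measure X) : MAlg.mk μ ⊥ = ⊥ := by
  rw [MAlg.mk, toBoolRing_bot, map_zero, toBoolAlg_zero]

theorem MAlg.mk_top (μ : Measure X) : MAlg.mk μ ⊤ = ⊤ := by
  rw [MAlg.mk, toBoolRing_top, map_one, toBoolAlg_one]

theorem MAlg.mk_le_mk {μ : Measure X} {s t : MSet X} :
    MAlg.mk μ s ≤ MAlg.mk μ t ↔ μ (s.1 \ t.1) = 0 := by
  rw [← inf_eq_left, ← MAlg.mk_inf, MAlg.mk_eq_mk]
  have h : ((s ⊓ t : MSet X) : Set X) ∆ s.1 = s.1 \ t.1 := by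
    simp only [MeasurableSet.inf_eq_inter, MeasurableSet.coe_inter, symmDiff_def,
      Set.sup_eq_union]
    ext x
    simp only [Set.mem_union, Set.mem_diff, Set.mem_inter_iff]
    tauto
  rw [h]

theorem MAlg.mk_mono {μ : Measure X} {s t : MSet X} (h : s.1 ⊆ t.1) :
    MAlg.mk μ s ≤ MAlg.mk μ t := by
  rw [MAlg.mk_le_mk, Set.diff_eq_empty.mpr h]
  exact measure_empty

theorem MAlg.mk_eq_bot {μ : Measure X} {s : MSet X} :
    MAlg.mk μ s = ⊥ ↔ μ s.1 = 0 := by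
  rw [← MAlg.mk_bot μ, MAlg.mk_eq_mk]
  have h : s.1 ∆ ((⊥ : MSet X) : Set X) = s.1 := by
    simp [symmDiff_def]
  rw [h]

theorem mval_nonneg (μ : Measure X) (x : MAlg X μ) : 0 ≤ mval μ x := by
  obtain ⟨s, rfl⟩ := MAlg.mk_surjective μ x
  rw [mval_mk]
  exact ENNReal.toReal_nonneg

theorem mval_bot (μ : Measure X) : mval μ (⊥ : MAlg X μ) = 0 := by
  rw [← MAlg.mk_bot μ, mval_mk]
  simp

theorem eq_bot_of_mval_eq_zero {μ : Measure X} [IsFiniteMeasure μ] {x : MAlg X μ}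
    (h : mval μ x = 0) : x = ⊥ := by
  obtain ⟨s, rfl⟩ := MAlg.mk_surjective μ x
  rw [mval_mk] at h
  rw [MAlg.mk_eq_bot]
  exact (ENNReal.toReal_eq_zero_iff _).mp h |>.resolve_right (measure_ne_top μ _)

theorem mval_mono {μ : Measure X} [IsFiniteMeasure μ] {x y : MAlg X μ} (h : x ≤ y) :
    mval μ x ≤ mval μ y := by
  obtain ⟨s, rfl⟩ := MAlg.mk_surjective μ x
  obtain ⟨t, rfl⟩ := MAlg.mk_surjective μ y
  rw [MAlg.mk_le_mk] at h
  rw [mval_mk, mval_mk]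
  refine ENNReal.toReal_mono (measure_ne_top μ _) ?_
  calc μ s.1 ≤ μ (s.1 ∩ t.1) + μ (s.1 \ t.1) := measure_le_inter_add_diff μ s.1 t.1
    _ = μ (s.1 ∩ t.1) := by rw [h, add_zero]
    _ ≤ μ t.1 := measure_mono Set.inter_subset_right

theorem mval_sup_disjoint {μ : Measure X} [IsFiniteMeasure μ] {x y : MAlg X μ}
    (h : x ⊓ y = ⊥) : mval μ (x ⊔ y) = mval μ x + mval μ y := by
  obtain ⟨s, rfl⟩ := MAlg.mk_surjective μ x
  obtain ⟨t, rfl⟩ := MAlg.mk_surjective μ y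
  rw [← MAlg.mk_inf, MAlg.mk_eq_bot] at h
  have h' : μ (s.1 ∩ t.1) = 0 := by
    simpa [MeasurableSet.inf_eq_inter] using h
  rw [← MAlg.mk_sup, mval_mk, mval_mk, mval_mk]
  have hc : ((s ⊔ t : MSet X) : Set X) = s.1 ∪ t.1 := by
    simp [MeasurableSet.sup_eq_union]
  rw [hc]
  have hu : μ (s.1 ∪ t.1) = μ s.1 + μ t.1 := by
    have := measure_union_add_inter (μ := μ) s.1 t.2
    rw [h', add_zero] at this
    exact this
  rw [hu, ENNReal.toReal_add (measure_ne_top μ _) (measure_ne_top μ _)]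

theorem mval_sdiff_of_le {μ : Measure X} [IsFiniteMeasure μ] {x y : MAlg X μ}
    (h : y ≤ x) : mval μ (x \ y) = mval μ x - mval μ y := by
  have hd : y ⊓ (x \ y) = ⊥ := inf_sdiff_self_right
  have hs : y ⊔ (x \ y) = x := sup_sdiff_cancel' le_rfl h
  have := mval_sup_disjoint hd
  rw [hs] at this
  linarith

theorem mval_isGLB_ge {μ : Measure X} [IsFiniteMeasure μ]
    {S : Set (MAlg X μ)} (hne : S.Nonempty)
    (hmeet : ∀ x ∈ S, ∀ y ∈ S, x ⊓ y ∈ S) {p : MAlg X μ} (hglb : IsGLB S p)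
    {c : ℝ} (hc : 0 ≤ c) (h : ∀ x ∈ S, c ≤ mval μ x) : c ≤ mval μ p := by
  set I := sInf (mval μ '' S) with hI
  have hbdd : BddBelow (mval μ '' S) := ⟨c, by rintro _ ⟨x, hx, rfl⟩; exact h x hx⟩
  have hIne : (mval μ '' S).Nonempty := hne.image _
  have hcI : c ≤ I := le_csInf hIne (by rintro _ ⟨x, hx, rfl⟩; exact h x hx)
  have hI_le : ∀ x ∈ S, I ≤ mval μ x := fun x hx => csInf_le hbdd ⟨x, hx, rfl⟩
  -- choose approximating sequence
  have hex : ∀ k : ℕ, ∃ x, x ∈ S ∧ mval μ x < I + 1 / (k + 1) := by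
    intro k
    have hlt : I < I + 1 / (k + 1 : ℝ) := by
      have : (0:ℝ) < 1 / (k + 1) := by positivity
      linarith
    obtain ⟨r, ⟨x, hx, rfl⟩, hr⟩ := exists_lt_of_csInf_lt hIne hlt
    exact ⟨x, hx, hr⟩
  choose s hsS hslt using hex
  -- decreasing meets
  set u : ℕ → MAlg X μ := fun k => Nat.rec (s 0) (fun k uk => uk ⊓ s (k + 1)) k with hu
  have hu_succ : ∀ k, u (k + 1) = u k ⊓ s (k + 1) := fun k => rfl
  have huS : ∀ k, u k ∈ S := by
    intro k
    induction k with
    | zero => exact hsS 0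
    | succ k ih => rw [hu_succ]; exact hmeet _ ih _ (hsS (k + 1))
  have hu_anti : Antitone u := antitone_nat_of_succ_le fun k => by
    rw [hu_succ]; exact inf_le_left
  have hu_le_s : ∀ k, u k ≤ s k := by
    intro k
    cases k with
    | zero => exact le_rfl
    | succ k => rw [hu_succ]; exact inf_le_right
  have hu_lt : ∀ k, mval μ (u k) < I + 1 / (k + 1) :=
    fun k => lt_of_le_of_lt (mval_mono (hu_le_s k)) (hslt k)
  have hu_ge : ∀ k, I ≤ mval μ (u k) := fun k => hI_le _ (huS k)
  -- representatives
  choose r hr using fun k => MAlg.mk_surjective μ (u k)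
  set R : ℕ → MSet X := fun k => Nat.rec (r 0) (fun k Rk => Rk ⊓ r (k + 1)) k with hRdef
  have hR_succ : ∀ k, R (k + 1) = R k ⊓ r (k + 1) := fun k => rfl
  have hR : ∀ k, MAlg.mk μ (R k) = u k := by
    intro k
    induction k with
    | zero => exact hr 0
    | succ k ih =>
        rw [hR_succ, MAlg.mk_inf, ih, hr (k + 1)]
        exact inf_eq_right.mpr (hu_anti (Nat.le_succ k))
  have hRanti : Antitone fun k => ((R k : MSet X) : Set X) := by
    refine antitone_nat_of_succ_le fun k => ?_
    rw [hR_succ]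
    simp only [MeasurableSet.inf_eq_inter, MeasurableSet.coe_inter]
    exact Set.inter_subset_left
  set T : Set X := ⋂ k, ((R k : MSet X) : Set X) with hTdef
  have hT : MeasurableSet T := MeasurableSet.iInter fun k => (R k).2
  set t : MAlg X μ := MAlg.mk μ ⟨T, hT⟩ with ht
  have h_t_le : ∀ k, t ≤ u k := fun k => (hR k) ▸ MAlg.mk_mono (Set.iInter_subset _ k)
  have hμT : μ T = ⨅ k, μ ((R k : MSet X) : Set X) :=
    hRanti.measure_iInter (fun k => (R k).2.nullMeasurableSet) ⟨0, measure_ne_top μ _⟩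
  have hmval_R : ∀ k, (μ ((R k : MSet X) : Set X)).toReal = mval μ (u k) := by
    intro k; rw [← hR k, mval_mk]
  have h_t_ge : I ≤ mval μ t := by
    have hmvalt : mval μ t = (μ T).toReal := mval_mk μ _
    rw [hmvalt, hμT]
    have h1 : ENNReal.ofReal I ≤ ⨅ k, μ ((R k : MSet X) : Set X) := by
      refine le_iInf fun k => ?_
      refine ENNReal.ofReal_le_of_le_toReal ?_
      rw [hmval_R k]; exact hu_ge k
    calc I = (ENNReal.ofReal I).toReal := (ENNReal.toReal_ofReal (hc.trans hcI)).symm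
      _ ≤ _ := ENNReal.toReal_mono
          (by
            refine ne_top_of_le_ne_top (measure_ne_top μ ((R 0 : MSet X) : Set X)) ?_
            exact iInf_le _ 0) h1
  have h_t_lb : ∀ v ∈ S, t ≤ v := by
    intro v hv
    have key : ∀ k : ℕ, mval μ (t \ v) < 1 / (k + 1) := by
      intro k
      have h1 : t \ v ≤ u k \ (u k ⊓ v) := by
        rw [sdiff_inf_self_left]
        exact sdiff_le_sdiff_right (h_t_le k)
      have h2 : mval μ (u k \ (u k ⊓ v)) = mval μ (u k) - mval μ (u k ⊓ v) :=
        mval_sdiff_of_le inf_le_left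
      have h3 : I ≤ mval μ (u k ⊓ v) := hI_le _ (hmeet _ (huS k) v hv)
      have h4 := hu_lt k
      have h5 := mval_mono h1
      rw [h2] at h5
      linarith
    have h0 : mval μ (t \ v) = 0 := by
      by_contra hne0
      have hpos : 0 < mval μ (t \ v) := lt_of_le_of_ne (mval_nonneg μ _) (Ne.symm hne0)
      obtain ⟨k, hk⟩ := exists_nat_one_div_lt hpos
      exact absurd (key k) (not_lt.mpr hk.le)
    exact sdiff_eq_bot_iff.mp (eq_bot_of_mval_eq_zero h0)
  have h_t_le_p : t ≤ p := hglb.2 h_t_lb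
  exact hcI.trans (h_t_ge.trans (mval_mono h_t_le_p))

theorem mval_top {μ : Measure X} [IsProbabilityMeasure μ] :
    mval μ (⊤ : MAlg X μ) = 1 := by
  rw [← MAlg.mk_top μ, mval_mk]
  have h : ((⊤ : MSet X) : Set X) = Set.univ := rfl
  rw [h, measure_univ, ENNReal.toReal_one]

end Infra

instance lam.isProbabilityMeasure (κ : Type u) : IsProbabilityMeasure (lam κ) :=
  ⟨MeasureTheory.Measure.addHaarMeasure_self⟩


/-- If the measure induced by `φ : A → M_κ` is purely atomic, `λ_κ ∘ φ = Σ_n a_n δ_{V_n}`,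
then the elements `p_n = inf φ[V_n]` form a maximal antichain in `M_κ` with
`λ_κ(p_n) ≥ a_n`. -/
theorem purely_atomic_name_maximal_antichain
    {A : Type u} [BooleanAlgebra A] (κ : Type u) [Infinite κ]
    (V : ℕ → Set A) (hV : ∀ n, IsUltrafilterOn (V n)) (hVdist : Function.Injective V)
    (a : ℕ → ℝ) (ha : ∀ n, 0 < a n) (hsum : (∑' n : ℕ, a n) = 1)
    (φ : BoundedLatticeHom A (MAlg (Cube κ) (lam κ)))
    (hφ : ∀ x : A, mval (lam κ) (φ x) = ∑' n : ℕ, if x ∈ V n then a n else 0)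
    (p : ℕ → MAlg (Cube κ) (lam κ))
    (hp : ∀ n, IsGLB (φ '' V n) (p n)) :
    (∀ m n : ℕ, m ≠ n → p m ⊓ p n = ⊥) ∧
      (∀ n, a n ≤ mval (lam κ) (p n)) ∧
      IsLUB (Set.range p) ⊤ := by
  -- summability
  have hsummable : Summable a := by
    by_contra hns
    rw [tsum_eq_zero_of_not_summable hns] at hsum
    exact zero_ne_one hsum
  have hφ_ge : ∀ n, ∀ v ∈ V n, a n ≤ mval (lam κ) (φ v) := by
    intro n v hv
    rw [hφ v]
    have hf : Summable fun m => if v ∈ V m then a m else 0 := by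
      refine Summable.of_nonneg_of_le (fun m => ?_) (fun m => ?_) hsummable
      · by_cases h : v ∈ V m <;> simp [h, (ha m).le]
      · by_cases h : v ∈ V m <;> simp [h, (ha m).le]
    have := Summable.le_tsum hf n (fun m _ => by by_cases h : v ∈ V m <;> simp [h, (ha m).le])
    simpa [hv] using this
  -- part 1: disjointness
  have part1 : ∀ m n : ℕ, m ≠ n → p m ⊓ p n = ⊥ := by
    have key : ∀ i j : ℕ, (∃ x, x ∈ V i ∧ x ∉ V j) → p i ⊓ p j = ⊥ := by
      rintro i j ⟨x, hxi, hxj⟩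
      have hxc : xᶜ ∈ V j := ((hV j).2.2.2 x).resolve_left hxj
      have h1 : p i ≤ φ x := (hp i).1 ⟨x, hxi, rfl⟩
      have h2 : p j ≤ φ xᶜ := (hp j).1 ⟨xᶜ, hxc, rfl⟩
      have h3 : φ x ⊓ φ xᶜ = ⊥ := by
        rw [← map_inf φ x xᶜ, inf_compl_eq_bot, map_bot φ]
      exact le_bot_iff.mp (h3 ▸ inf_le_inf h1 h2)
    intro m n hmn
    have hVne : V m ≠ V n := fun h => hmn (hVdist h)
    by_cases hsub : V m ⊆ V n
    · have : ¬ V n ⊆ V m := fun h' => hVne (Set.Subset.antisymm hsub h')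
      obtain ⟨x, hx1, hx2⟩ := Set.not_subset.mp this
      rw [inf_comm]
      exact key n m ⟨x, hx1, hx2⟩
    · obtain ⟨x, hx1, hx2⟩ := Set.not_subset.mp hsub
      exact key m n ⟨x, hx1, hx2⟩
  -- part 2
  have htopmem : ∀ n, (⊤ : A) ∈ V n := fun n =>
    ((hV n).2.2.2 ⊤).resolve_right (by simpa using (hV n).1)
  have part2 : ∀ n, a n ≤ mval (lam κ) (p n) := by
    intro n
    refine mval_isGLB_ge (S := ⇑φ '' V n) ⟨φ ⊤, ⟨⊤, htopmem n, rfl⟩⟩ ?_ (hp n) (ha n).le ?_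
    · rintro _ ⟨x, hx, rfl⟩ _ ⟨y, hy, rfl⟩
      exact ⟨x ⊓ y, (hV n).2.1 x hx y hy, map_inf φ x y⟩
    · rintro _ ⟨v, hv, rfl⟩
      exact hφ_ge n v hv
  refine ⟨part1, part2, ?_, ?_⟩
  · rintro _ ⟨n, rfl⟩
    exact le_top
  · intro b hb
    have hpb : ∀ n, p n ≤ b := fun n => hb ⟨n, rfl⟩
    set q : ℕ → MAlg (Cube κ) (lam κ) := fun N => Nat.rec ⊥ (fun N qN => qN ⊔ p N) N with hq
    have hq_succ : ∀ N, q (N + 1) = q N ⊔ p N := fun N => rfl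
    have hq_le : ∀ N, q N ≤ b := by
      intro N
      induction N with
      | zero => exact bot_le
      | succ N ih => rw [hq_succ]; exact sup_le ih (hpb N)
    have hq_disj : ∀ N m, N ≤ m → q N ⊓ p m = ⊥ := by
      intro N
      induction N with
      | zero => intro m _; exact bot_inf_eq _
      | succ N ih =>
          intro m hm
          rw [hq_succ, inf_sup_right, ih m (Nat.le_of_succ_le hm),
            part1 N m (Nat.ne_of_lt hm), sup_idem]
    have hq_val : ∀ N, mval (lam κ) (q N) = ∑ n ∈ Finset.range N, mval (lam κ) (p n) := by
      intro N
      induction N with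
      | zero => simp only [Finset.range_zero, Finset.sum_empty]; exact mval_bot (lam κ)
      | succ N ih =>
          rw [hq_succ, mval_sup_disjoint (hq_disj N N le_rfl), ih, Finset.sum_range_succ]
    have hble : ∀ N, ∑ n ∈ Finset.range N, a n ≤ mval (lam κ) b := by
      intro N
      calc ∑ n ∈ Finset.range N, a n ≤ ∑ n ∈ Finset.range N, mval (lam κ) (p n) :=
            Finset.sum_le_sum fun n _ => part2 n
        _ = mval (lam κ) (q N) := (hq_val N).symm
        _ ≤ mval (lam κ) b := mval_mono (hq_le N)
    have h1le : (1 : ℝ) ≤ mval (lam κ) b := by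
      have htend : Tendsto (fun N => ∑ n ∈ Finset.range N, a n) atTop (𝓝 1) := by
        simpa [hsum] using hsummable.hasSum.tendsto_sum_nat
      exact le_of_tendsto htend (Filter.Eventually.of_forall hble)
    have hble1 : mval (lam κ) b ≤ 1 := by
      have := mval_mono (μ := lam κ) (le_top (a := b))
      rwa [mval_top] at this
    have hcompl : mval (lam κ) bᶜ = 0 := by
      have hsupd := mval_sup_disjoint (μ := lam κ) (x := b) (y := bᶜ) inf_compl_eq_bot
      rw [sup_compl_eq_top, mval_top] at hsupd
      have := mval_nonneg (lam κ) bᶜ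
      linarith
    have : bᶜ = ⊥ := eq_bot_of_mval_eq_zero hcompl
    exact top_le_iff.mpr (compl_eq_bot.mp this)
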